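/- Let G be a weakly closed finite simple graph and let Ḡ denote its complement graph. Then Ḡ contains no induced odd cycle of length 5 or more: for every odd k ≥ 5 there is no graph embedding (injective map preserving both adjacency and non-adjacency) of the cycle graph C_k into Ḡ. -/

import Mathlib

/-- `G` is weakly closed: some labeling of the vertices by `1, …, n` is such that for
every edge `{i, j}` with `i < j` and every `i < k < j`, `{i,k} ∈ E(G)` or `{k,j} ∈ E(G)`. -/
def WeaklyClosed {V : Type*} [Fintype V] (G : SimpleGraph V) : Prop :=
  ∃ σ : V ≃ Fin (Fintype.card V), ∀ i j k : V,
    G.Adj i j → σ i < σ k → σ k < σ j → G.Adj i k ∨ G.Adj k j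

open Fin.CommRing

private lemma val2' (n : ℕ) : ((2 : Fin (n+5))).val = 2 := by
  show 2 % (n+5) = 2; exact Nat.mod_eq_of_lt (by omega)

private lemma val3' (n : ℕ) : ((3 : Fin (n+5))).val = 3 := by
  show 3 % (n+5) = 3; exact Nat.mod_eq_of_lt (by omega)

private lemma cyc_adj_succ (n : ℕ) (i : Fin (n+5)) :
    (SimpleGraph.cycleGraph (n+5)).Adj i (i+1) := by
  rw [SimpleGraph.cycleGraph_adj']
  right
  rw [add_sub_cancel_left, Fin.val_one]

private lemma cyc_not_adj_two (n : ℕ) (i : Fin (n+5)) :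
    ¬ (SimpleGraph.cycleGraph (n+5)).Adj i (i+2) := by
  rw [SimpleGraph.cycleGraph_adj']
  rintro (h | h)
  · have h1 : i - (i+2) = 1 := Fin.ext (by rw [Fin.val_one]; exact h)
    have h3 : (3 : Fin (n+5)) = 0 := by
      have := sub_eq_iff_eq_add.mp h1
      linear_combination -this
    have := val3' n
    rw [h3, Fin.val_zero] at this
    omega
  · rw [add_sub_cancel_left, val2' n] at h
    omega

private lemma ne_add_two (n : ℕ) (i : Fin (n+5)) : i ≠ i + 2 := by
  intro h
  have h2 : (2 : Fin (n+5)) = 0 := by linear_combination -h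
  have := val2' n
  rw [h2, Fin.val_zero] at this
  omega

private lemma add_one_ne_add_two (n : ℕ) (i : Fin (n+5)) : i + 1 ≠ i + 2 := by
  intro h
  have h2 : (1 : Fin (n+5)) = 2 := add_left_cancel h
  have := val2' n
  rw [← h2, Fin.val_one] at this
  omega

/-- The complement of a weakly closed graph contains no induced odd cycle of
length 5 or more. -/
theorem no_induced_long_odd_cycle_in_compl_of_weaklyClosed {V : Type*} [Fintype V]
    (G : SimpleGraph V) (h : WeaklyClosed G) (m : ℕ) (hm : 5 ≤ m) (hodd : Odd m) :
    IsEmpty (SimpleGraph.cycleGraph m ↪g Gᶜ) := by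
  obtain ⟨n, rfl⟩ : ∃ n, m = n + 5 := ⟨m - 5, by omega⟩
  constructor
  intro f
  obtain ⟨σ, hσ⟩ := h
  set g : Fin (n+5) → Fin (Fintype.card V) := fun i => σ (f i) with hg
  have ginj : Function.Injective g := fun a b hab => f.injective (σ.injective hab)
  -- every vertex of the cycle is mapped to a local extremum of `g`
  have key : ∀ i : Fin (n+5), (g i < g (i+1)) ↔ (g (i+2) < g (i+1)) := by
    intro i
    have a1 : Gᶜ.Adj (f i) (f (i+1)) := f.map_adj_iff.mpr (cyc_adj_succ n i)
    have a2 : Gᶜ.Adj (f (i+1)) (f (i+2)) := by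
      have h12 : (i + 1) + 1 = i + 2 := by ring
      have := f.map_adj_iff.mpr (cyc_adj_succ n (i+1))
      rwa [h12] at this
    have na1 : ¬ G.Adj (f i) (f (i+1)) := ((G.compl_adj _ _).mp a1).2
    have na2 : ¬ G.Adj (f (i+1)) (f (i+2)) := ((G.compl_adj _ _).mp a2).2
    have a3 : G.Adj (f i) (f (i+2)) := by
      have nadj : ¬ Gᶜ.Adj (f i) (f (i+2)) := fun hc =>
        cyc_not_adj_two n i (f.map_adj_iff.mp hc)
      have hne : f i ≠ f (i+2) := fun hc => ne_add_two n i (f.injective hc)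
      rw [SimpleGraph.compl_adj, not_and_or] at nadj
      rcases nadj with hc | hc
      · exact absurd hne hc
      · exact not_not.mp hc
    have hne12 : g (i+1) ≠ g (i+2) := fun hc => add_one_ne_add_two n i (ginj hc)
    constructor
    · intro hlt
      rcases lt_trichotomy (g (i+2)) (g (i+1)) with h' | h' | h'
      · exact h'
      · exact absurd h'.symm hne12
      · rcases hσ (f i) (f (i+2)) (f (i+1)) a3 hlt h' with hc | hc
        · exact absurd hc na1
        · exact absurd hc na2
    · intro hlt
      rcases lt_trichotomy (g i) (g (i+1)) with h' | h' | h'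
      · exact h'
      · exact absurd (ginj h') (by
          intro hc
          have : i + 0 = i + 1 := by rw [add_zero]; exact hc
          have h10 : (0 : Fin (n+5)) = 1 := add_left_cancel this
          have v1 : ((1 : Fin (n+5))).val = 1 := by
            show 1 % (n+5) = 1; exact Nat.mod_eq_of_lt (by omega)
          rw [← h10, Fin.val_zero] at v1
          exact absurd v1 (by omega))
      · rcases hσ (f (i+2)) (f i) (f (i+1)) a3.symm hlt h' with hc | hc
        · exact absurd hc.symm na2
        · exact absurd hc.symm na1
  -- reformulate: the order relation flips at each step
  have flip : ∀ i : Fin (n+5), (g (i+1) < g ((i+1)+1)) ↔ ¬ (g i < g (i+1)) := by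
    intro i
    have h12 : (i + 1) + 1 = i + 2 := by ring
    rw [h12]
    have hne12 : g (i+1) ≠ g (i+2) := fun hc => add_one_ne_add_two n i (ginj hc)
    rw [key i]
    constructor
    · exact fun h1 h2 => lt_asymm h1 h2
    · intro h1
      rcases lt_trichotomy (g (i+1)) (g (i+2)) with h' | h' | h'
      · exact h'
      · exact absurd h' hne12
      · exact absurd h' h1
  -- parity induction around the cycle
  have par : ∀ k : ℕ,
      ((g (k : Fin (n+5)) < g ((k : Fin (n+5)) + 1)) ↔ ((g 0 < g 1) ↔ Even k)) := by
    intro k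
    induction k with
    | zero =>
      simp only [Nat.cast_zero, zero_add, Even.zero, iff_true]
    | succ k ih =>
      have hcast : ((k+1 : ℕ) : Fin (n+5)) = (k : Fin (n+5)) + 1 := by push_cast; ring
      rw [hcast, flip (k : Fin (n+5)), ih, Nat.even_add_one]
      tauto
  have h1 := par (n+5)
  rw [Fin.natCast_self] at h1
  have heven : ¬ Even (n+5) := Nat.not_even_iff_odd.mpr hodd
  rw [zero_add] at h1
  tauto
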